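/- Let p be an odd prime, let m ≥ 2 be an integer, and let q = p^m. Then there exists a nonsquare c ∈ F_q^× such that the polynomial X² - c does not divide the image in F_q[X] of the product ∏_{i=0}^{(p-1)/2} P̄_i(X) of the mod-p Legendre polynomials of degrees 0 through (p-1)/2. -/

import Mathlib

open Polynomial

/-- The mod-`p` reduction of the `r`-th Legendre polynomial
`P_r(X) = 2^{-r} · Σ_{k=0}^{⌊r/2⌋} (-1)^k · C(r,k) · C(2r-2k, r) · X^{r-2k}`,
defined directly over any field `E` (intended: of odd characteristic). -/
noncomputable def legendreMod (E : Type*) [Field E] (r : ℕ) : E[X] :=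
  C (((2 : E) ^ r)⁻¹) * ∑ k ∈ Finset.range (r / 2 + 1),
    C ((-1 : E) ^ k * (r.choose k : E) * (((2 * r - 2 * k).choose r : ℕ) : E)) * X ^ (r - 2 * k)

lemma legendreMod_natDegree_le (E : Type*) [Field E] (r : ℕ) :
    (legendreMod E r).natDegree ≤ r := by
  refine (natDegree_C_mul_le _ _).trans ?_
  refine (natDegree_sum_le _ _).trans ?_
  rw [Finset.fold_max_le]
  refine ⟨Nat.zero_le _, fun k hk => ?_⟩
  exact (natDegree_C_mul_le _ _).trans ((natDegree_X_pow _).le.trans (by omega))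

lemma legendreMod_coeff (E : Type*) [Field E] (r : ℕ) :
    (legendreMod E r).coeff r = ((2 : E) ^ r)⁻¹ * ((2 * r).choose r : ℕ) := by
  rw [legendreMod, coeff_C_mul, finset_sum_coeff]
  congr 1
  rw [Finset.sum_eq_single 0]
  · simp
  · intro k hk hk0
    rw [Finset.mem_range] at hk
    rw [coeff_C_mul, coeff_X_pow, if_neg (by omega), mul_zero]
  · simp

lemma legendreMod_ne_zero (p : ℕ) [Fact p.Prime] (F : Type*) [Field F] [CharP F p]
    (hp2 : p ≠ 2) (r : ℕ) (hr : 2 * r < p) : legendreMod F r ≠ 0 := by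
  have hp : p.Prime := Fact.out
  have hple := hp.two_le
  have h2 : (2 : F) ≠ 0 := by
    intro h
    have : ((2 : ℕ) : F) = 0 := by push_cast; exact h
    have := (CharP.cast_eq_zero_iff F p 2).mp this
    have := Nat.le_of_dvd (by norm_num) this
    omega
  have hch : (((2 * r).choose r : ℕ) : F) ≠ 0 := by
    intro h
    have hd := (CharP.cast_eq_zero_iff F p _).mp h
    have hfac : p ∣ (2 * r).factorial := by
      have := Nat.choose_mul_factorial_mul_factorial (show r ≤ 2 * r by omega)
      exact this ▸ Dvd.dvd.mul_right (hd.mul_right _) _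
    have := (Nat.Prime.dvd_factorial hp).mp hfac
    omega
  intro h
  have := legendreMod_coeff F r
  rw [h, coeff_zero] at this
  exact hch (by
    field_simp at this
    simpa using this.symm)

/-- For an odd prime `p`, `m ≥ 2` and `q = p^m`, there is a nonsquare `c ∈ F_q^×` such that
`X² - c` does not divide the image in `F_q[X]` of `∏_{i=0}^{(p-1)/2} P̄_i(X)`. -/
theorem exists_nonsquare_not_dvd_prod_legendre (p m : ℕ) [Fact p.Prime] (hodd : Odd p)
    (hm : 2 ≤ m)
    (F : Type*) [Field F] [Fintype F] (hF : Fintype.card F = p ^ m) :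
    ∃ c : F, c ≠ 0 ∧ ¬ IsSquare c ∧
      ¬ ((X ^ 2 - C c) ∣ ∏ i ∈ Finset.range ((p - 1) / 2 + 1), legendreMod F i) := by
  classical
  have hp : p.Prime := Fact.out
  have hp2 : p ≠ 2 := by rintro rfl; exact ((Nat.not_odd_iff_even.mpr even_two)) hodd
  have hp3 : 3 ≤ p := by
    rcases hp.two_le.lt_or_eq with h | h
    · omega
    · omega
  -- characteristic
  have hcharp : CharP F p := by
    have hcard0 : ((Fintype.card F : ℕ) : F) = 0 := Nat.cast_card_eq_zero F
    rw [hF] at hcard0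
    push_cast at hcard0
    have hpz : (p : F) = 0 :=
      (pow_eq_zero_iff (show m ≠ 0 by omega)).mp hcard0
    exact (CharP.charP_iff_prime_eq_zero hp).mpr hpz
  obtain ⟨N, hN⟩ := hodd
  have hNval : (p - 1) / 2 = N := by omega
  rw [hNval]
  by_contra hcon
  push_neg at hcon
  set Q := ∏ i ∈ Finset.range (N + 1), legendreMod F i with hQ
  have hQne : Q ≠ 0 := by
    refine Finset.prod_ne_zero_iff.mpr fun i hi => ?_
    rw [Finset.mem_range] at hi
    exact legendreMod_ne_zero p F hp2 i (by omega)
  -- the set of nonsquares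
  set S : Finset F := Finset.univ.filter fun c => ¬ IsSquare c with hS
  have hSmem : ∀ c ∈ S, c ≠ 0 ∧ ¬ IsSquare c := by
    intro c hc
    rw [hS, Finset.mem_filter] at hc
    refine ⟨?_, hc.2⟩
    rintro rfl
    exact hc.2 ⟨0, (mul_zero 0).symm⟩
  -- all X^2 - c for c in S divide Q
  have hdvd : ∀ c ∈ S, (X ^ 2 - C c) ∣ Q := fun c hc =>
    hcon c (hSmem c hc).1 (hSmem c hc).2
  have hpair : (↑S : Set F).Pairwise (Function.onFun IsCoprime fun c => (X : F[X]) ^ 2 - C c) := by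
    intro c _ c' _ hne
    have hsub : c' - c ≠ 0 := sub_ne_zero_of_ne (Ne.symm hne)
    refine ⟨C ((c' - c)⁻¹), -C ((c' - c)⁻¹), ?_⟩
    have : C ((c' - c)⁻¹) * (X ^ 2 - C c) + -C ((c' - c)⁻¹) * (X ^ 2 - C c') =
        C ((c' - c)⁻¹ * (c' - c)) := by
      rw [map_mul, map_sub]; ring
    rw [this, inv_mul_cancel₀ hsub, map_one]
  have hproddvd : (∏ c ∈ S, ((X : F[X]) ^ 2 - C c)) ∣ Q :=
    Finset.prod_dvd_of_coprime hpair hdvd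
  -- degree bounds
  have hdegprod : (∏ c ∈ S, ((X : F[X]) ^ 2 - C c)).natDegree = 2 * S.card := by
    rw [Polynomial.natDegree_prod _ _ fun c _ => X_pow_sub_C_ne_zero (by norm_num) c]
    rw [Finset.sum_congr rfl fun c _ => natDegree_X_pow_sub_C]
    rw [Finset.sum_const, smul_eq_mul, mul_comm]
  have hdegQ : Q.natDegree ≤ N * (N + 1) / 2 := by
    refine (Polynomial.natDegree_prod_le _ _).trans ?_
    calc ∑ i ∈ Finset.range (N + 1), (legendreMod F i).natDegree
        ≤ ∑ i ∈ Finset.range (N + 1), i :=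
          Finset.sum_le_sum fun i _ => legendreMod_natDegree_le F i
      _ = N * (N + 1) / 2 := by rw [Finset.sum_range_id, Nat.add_sub_cancel, Nat.mul_comm]
  have hle : 2 * S.card ≤ N * (N + 1) / 2 := by
    rw [← hdegprod]
    exact (Polynomial.natDegree_le_of_dvd hproddvd hQne).trans hdegQ
  -- count nonsquares: S.card ≥ (q-1)/2
  have hT : (Finset.univ.filter fun c : F => c ≠ 0 ∧ IsSquare c).card ≤ S.card := by
    obtain ⟨a, ha⟩ := FiniteField.exists_nonsquare (F := F)
      (by rw [ringChar.eq F p]; exact hp2)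
    have ha0 : a ≠ 0 := by rintro rfl; exact ha ⟨0, (mul_zero 0).symm⟩
    refine Finset.card_le_card_of_injOn (fun x => a * x) ?_ ?_
    · intro x hx
      rw [Finset.mem_coe, Finset.mem_filter] at hx
      obtain ⟨-, hx0, b, hb⟩ := hx
      rw [hS, Finset.mem_coe, Finset.mem_filter]
      refine ⟨Finset.mem_univ _, ?_⟩
      rintro ⟨d, hd⟩
      refine ha ⟨d * b⁻¹, ?_⟩
      have hb0 : b ≠ 0 := by rintro rfl; rw [mul_zero] at hb; exact hx0 hb
      have key : a * (b * b) = d * d := by rw [← hb, ← hd]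
      field_simp
      linear_combination key
    · intro x _ y _ hxy
      exact mul_left_cancel₀ ha0 hxy
  have hcardsplit :
      (Finset.univ.filter fun c : F => c ≠ 0 ∧ IsSquare c).card + S.card
        = Fintype.card F - 1 := by
    have h1 : (Finset.univ.filter fun c : F => c ≠ 0).card = Fintype.card F - 1 := by
      rw [Finset.filter_ne', Finset.card_erase_of_mem (Finset.mem_univ _), Finset.card_univ]
    rw [← h1]
    have h2 := Finset.card_filter_add_card_filter_not
      (s := Finset.univ.filter fun c : F => c ≠ 0) (p := fun c => IsSquare c)
    rw [Finset.filter_filter, Finset.filter_filter] at h2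
    rw [← h2]
    have h3 : (Finset.univ.filter fun c : F => ¬ IsSquare c)
        = Finset.univ.filter fun c : F => c ≠ 0 ∧ ¬ IsSquare c := by
      apply Finset.filter_congr
      intro c _
      constructor
      · intro h
        exact ⟨by rintro rfl; exact h ⟨0, (mul_zero 0).symm⟩, h⟩
      · exact And.right
    rw [hS, h3]
  -- final contradiction
  have hq2 : p ^ 2 ≤ p ^ m := Nat.pow_le_pow_right hp.pos hm
  have hq1 : 2 ≤ p ^ m := by
    calc 2 ≤ p := by omega
    _ ≤ p ^ m := Nat.le_self_pow (by omega) p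
  have hNN : N * (N + 1) < p * p := by nlinarith
  have hpp : p * p = p ^ 2 := by ring
  have hgauss : N * (N + 1) / 2 ≤ N * (N + 1) := Nat.div_le_self _ _
  -- q - 1 ≤ S.card + S.card
  rw [hF] at hcardsplit
  have : N * (N + 1) / 2 * 2 ≤ N * (N + 1) := by omega
  omega
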